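/- For real β, γ ≥ 0, the two inequalities (6γ−1)x² − 2x³ + βx⁴ ≥ 0 and 2γ − x + (β−2)x² ≥ 0 hold for every x > 0 if and only if min( β(6γ−1), 8(β−2)γ ) ≥ 1. -/

import Mathlib

open Real

/-- For `β, γ ≥ 0`, the two inequalities `(6γ−1)x² − 2x³ + βx⁴ ≥ 0` and
`2γ − x + (β−2)x² ≥ 0` hold for every `x > 0` iff `min(β(6γ−1), 8(β−2)γ) ≥ 1`. -/
theorem grushin_infty_ricci_nonneg_iff (β γ : ℝ) (hβ : 0 ≤ β) (hγ : 0 ≤ γ) :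
    (∀ x : ℝ, 0 < x →
        (6 * γ - 1) * x ^ 2 - 2 * x ^ 3 + β * x ^ 4 ≥ 0 ∧
        2 * γ - x + (β - 2) * x ^ 2 ≥ 0) ↔
      min (β * (6 * γ - 1)) (8 * (β - 2) * γ) ≥ 1 := by
  constructor
  · intro h
    have hβpos : 0 < β := by
      by_contra hb
      push_neg at hb
      have hβ0 : β = 0 := le_antisymm hb hβ
      have h1 := (h (3 * γ + 1) (by positivity)).1
      rw [hβ0] at h1
      nlinarith [sq_nonneg (3 * γ + 1), mul_pos (by positivity : (0:ℝ) < 3*γ+1)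
        (by positivity : (0:ℝ) < (3*γ+1)^2)]
    have hβ2 : 2 < β := by
      by_contra hb
      push_neg at hb
      have h2 := (h (2 * γ + 1) (by positivity)).2
      nlinarith [sq_nonneg (2 * γ + 1), mul_nonneg (mul_nonneg hγ hγ) (sub_nonneg.mpr hb)]
    have hA : 1 ≤ β * (6 * γ - 1) := by
      have hb : β ≠ 0 := ne_of_gt hβpos
      have h1 := (h (1 / β) (by positivity)).1
      field_simp at h1
      nlinarith [h1]
    have hB : 1 ≤ 8 * (β - 2) * γ := by
      have hd : 0 < β - 2 := by linarith
      have hb : β - 2 ≠ 0 := ne_of_gt hd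
      have h2 := (h (1 / (2 * (β - 2))) (by positivity)).2
      field_simp at h2
      nlinarith [h2]
    exact le_min hA hB
  · intro hmin x hx
    have hA : 1 ≤ β * (6 * γ - 1) := le_trans hmin (min_le_left _ _)
    have hB : 1 ≤ 8 * (β - 2) * γ := le_trans hmin (min_le_right _ _)
    have hβpos : 0 < β := by nlinarith [mul_nonneg hβ hγ]
    have hβ2 : 0 < β - 2 := by nlinarith [mul_nonneg hβ hγ]
    constructor
    · have hx2 : x ^ 2 ≤ β * (6 * γ - 1) * x ^ 2 :=
        le_mul_of_one_le_left (sq_nonneg x) hA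
      nlinarith [sq_nonneg (β * x ^ 2 - x), hx2, mul_pos hx hx]
    · nlinarith [sq_nonneg (2 * (β - 2) * x - 1), mul_nonneg hγ hβ2.le]
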